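/- Let A be definite. Each column (A*)_{·k} of the Kleene star is a max extremal of the max-algebraic span of the columns of A*: if (A*)_{·k} = u ⊕ w with u, w in the span, then (A*)_{·k} = u or (A*)_{·k} = w. -/

import Mathlib

open Finset

/-- Max-times matrix product: `(A ⊗ B) i j = max_k (A i k * B k j)`. -/
noncomputable def mProd {n : ℕ} (A B : Matrix (Fin n) (Fin n) NNReal) :
    Matrix (Fin n) (Fin n) NNReal :=
  fun i j => univ.sup fun k => A i k * B k j

/-- Max-algebraic matrix powers, `mPow A 0 = I`. -/
noncomputable def mPow {n : ℕ} (A : Matrix (Fin n) (Fin n) NNReal) :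
    ℕ → Matrix (Fin n) (Fin n) NNReal
  | 0 => fun i j => if i = j then 1 else 0
  | k + 1 => mProd (mPow A k) A

/-- Kleene star `A* = I ⊕ A ⊕ ... ⊕ A^{n-1}` in max algebra. -/
noncomputable def klStar {n : ℕ} (A : Matrix (Fin n) (Fin n) NNReal) :
    Matrix (Fin n) (Fin n) NNReal :=
  fun i j => (Finset.range n).sup fun k => mPow A k i j

/-- Partial "sums" `I ⊕ A ⊕ ... ⊕ A^m` of the Kleene star series. -/
noncomputable def kPartial {n : ℕ} (A : Matrix (Fin n) (Fin n) NNReal) (m : ℕ) :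
    Matrix (Fin n) (Fin n) NNReal :=
  fun i j => (Finset.range (m + 1)).sup fun k => mPow A k i j

/-- The weight of the cycle given by the list `l` (with wrap-around edge). -/
def cycleWeight {n : ℕ} (A : Matrix (Fin n) (Fin n) NNReal) (l : List (Fin n)) : NNReal :=
  ((l.zip (l.rotate 1)).map fun p => A p.1 p.2).prod

/-- The geometric mean of a cycle: `w(σ,A)^{1/k}`. -/
noncomputable def cycleMean {n : ℕ} (A : Matrix (Fin n) (Fin n) NNReal) (l : List (Fin n)) :
    NNReal :=
  (cycleWeight A l) ^ ((l.length : ℝ)⁻¹)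

/-- The maximum cycle geometric mean `λ(A)`. -/
noncomputable def maxCycleMean {n : ℕ} (A : Matrix (Fin n) (Fin n) NNReal) : NNReal :=
  sSup {x | ∃ l : List (Fin n), l ≠ [] ∧ x = cycleMean A l}

/-- `(i,j)` is a critical edge: it lies on a cycle attaining `λ(A)`. -/
def criticalEdge {n : ℕ} (A : Matrix (Fin n) (Fin n) NNReal) (i j : Fin n) : Prop :=
  ∃ l : List (Fin n), l ≠ [] ∧ cycleMean A l = maxCycleMean A ∧ (i, j) ∈ l.zip (l.rotate 1)

/-- Max-algebraic matrix-vector product. -/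
noncomputable def mVec {n : ℕ} (A : Matrix (Fin n) (Fin n) NNReal) (x : Fin n → NNReal) :
    Fin n → NNReal :=
  fun i => univ.sup fun j => A i j * x j


namespace Stmt13Aux

variable {n : ℕ} (A : Matrix (Fin n) (Fin n) NNReal)

/-- weight of a walk given by its full vertex list -/
def wW : List (Fin n) → NNReal
  | [] => 1
  | [_] => 1
  | a :: b :: l => A a b * wW (b :: l)

@[simp] lemma wW_nil : wW A [] = 1 := rfl
@[simp] lemma wW_single (a : Fin n) : wW A [a] = 1 := rfl
@[simp] lemma wW_cons_cons (a b : Fin n) (l : List (Fin n)) :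
    wW A (a :: b :: l) = A a b * wW A (b :: l) := rfl

lemma wW_split (x : List (Fin n)) (v : Fin n) (y : List (Fin n)) :
    wW A (x ++ v :: y) = wW A (x ++ [v]) * wW A (v :: y) := by
  induction x with
  | nil => simp
  | cons a x ih =>
    cases x with
    | nil => simp
    | cons b x' =>
      simp only [List.cons_append, wW_cons_cons] at ih ⊢
      rw [ih, mul_assoc]

lemma helper_zip (l : List (Fin n)) : ∀ v w : Fin n,
    (((v :: l).zip (l ++ [w])).map fun p => A p.1 p.2).prod = wW A (v :: (l ++ [w])) := by
  induction l with
  | nil => intro v w; simp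
  | cons a l ih =>
    intro v w
    simp only [List.cons_append, List.zip_cons_cons, List.map_cons, List.prod_cons, wW_cons_cons]
    rw [ih a w]

lemma cycleWeight_eq_wW (v : Fin n) (l : List (Fin n)) :
    cycleWeight A (v :: l) = wW A (v :: (l ++ [v])) := by
  have hrot : (v :: l).rotate 1 = l ++ [v] := by
    rw [List.rotate_cons_succ, List.rotate_zero]
  rw [cycleWeight, hrot, helper_zip]

@[simp] lemma mPow_zero (i j : Fin n) :
    mPow A 0 i j = if i = j then 1 else 0 := rfl

lemma mPow_one (i j : Fin n) : mPow A 1 i j = A i j := by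
  show (univ.sup fun t => (if i = t then (1:NNReal) else 0) * A t j) = A i j
  apply le_antisymm
  · exact Finset.sup_le fun t _ => by by_cases h : i = t <;> simp [h]
  · have := Finset.le_sup (f := fun t => (if i = t then (1:NNReal) else 0) * A t j)
      (Finset.mem_univ i)
    simpa using this

lemma mul_finsetSup_le {α : Type*} {s : Finset α} {f : α → NNReal} {x y : NNReal}
    (h : ∀ a ∈ s, x * f a ≤ y) : x * s.sup f ≤ y := by
  rcases s.eq_empty_or_nonempty with rfl | hs
  · simp
  · obtain ⟨a, ha, hsup⟩ := Finset.exists_mem_eq_sup s hs f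
    rw [hsup]; exact h a ha

lemma finsetSup_mul_le {α : Type*} {s : Finset α} {f : α → NNReal} {x y : NNReal}
    (h : ∀ a ∈ s, f a * x ≤ y) : s.sup f * x ≤ y := by
  rw [mul_comm]
  exact mul_finsetSup_le fun a ha => by rw [mul_comm]; exact h a ha

lemma mPow_mul_le (a : ℕ) : ∀ (b : ℕ) (i p j : Fin n),
    mPow A a i p * mPow A b p j ≤ mPow A (a + b) i j := by
  intro b
  induction b with
  | zero =>
    intro i p j
    by_cases h : p = j
    · subst h; simp
    · simp [h]
  | succ b ih =>
    intro i p j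
    show mPow A a i p * ((univ.sup fun t => mPow A b p t * A t j)) ≤ _
    apply mul_finsetSup_le
    intro t _
    rw [← mul_assoc]
    calc mPow A a i p * mPow A b p t * A t j ≤ mPow A (a + b) i t * A t j :=
          mul_le_mul_left (ih i p t) _
      _ ≤ mPow A (a + (b+1)) i j := by
          have : a + (b + 1) = (a + b) + 1 := by omega
          rw [this]
          exact Finset.le_sup (f := fun t => mPow A (a+b) i t * A t j) (Finset.mem_univ t)

lemma wW_le_mPow : ∀ (l : List (Fin n)) (i j : Fin n), (i :: l).getLast? = some j →
    wW A (i :: l) ≤ mPow A l.length i j := by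
  intro l
  induction l with
  | nil =>
    intro i j hj
    simp only [List.getLast?_singleton, Option.some.injEq] at hj
    subst hj; simp
  | cons a l ih =>
    intro i j hj
    rw [List.getLast?_cons_cons] at hj
    calc wW A (i :: a :: l) = A i a * wW A (a :: l) := rfl
      _ ≤ A i a * mPow A l.length a j := mul_le_mul_right (ih a j hj) _
      _ = mPow A 1 i a * mPow A l.length a j := by rw [mPow_one]
      _ ≤ mPow A (1 + l.length) i j := mPow_mul_le A 1 l.length i a j
      _ = mPow A (a :: l).length i j := by rw [List.length_cons]; ring_nf

lemma exists_dup_decomp {α : Type*} : ∀ (l : List α), ¬ l.Nodup →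
    ∃ (l1 : List α) (v : α) (l2 l3 : List α), l = l1 ++ v :: (l2 ++ v :: l3) := by
  intro l
  induction l with
  | nil => intro h; exact absurd List.nodup_nil h
  | cons a t ih =>
    intro h
    by_cases ht : t.Nodup
    · have ha : a ∈ t := by
        by_contra hat
        exact h (List.nodup_cons.mpr ⟨hat, ht⟩)
      obtain ⟨l2, l3, rfl⟩ := List.append_of_mem ha
      exact ⟨[], a, l2, l3, rfl⟩
    · obtain ⟨l1, v, l2, l3, rfl⟩ := ih ht
      exact ⟨a :: l1, v, l2, l3, rfl⟩

variable (hcyc : ∀ c : List (Fin n), c ≠ [] → cycleWeight A c ≤ 1)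

include hcyc

lemma wW_le_klStar : ∀ (N : ℕ) (l : List (Fin n)) (i j : Fin n), l.length ≤ N →
    (i :: l).getLast? = some j → wW A (i :: l) ≤ klStar A i j := by
  intro N
  induction N with
  | zero =>
    intro l i j hlen hj
    have hl0 : l = [] := List.length_eq_zero_iff.mp (Nat.le_zero.mp hlen)
    subst hl0
    simp only [List.getLast?_singleton, Option.some.injEq] at hj
    subst hj
    calc wW A [i] = 1 := rfl
      _ ≤ klStar A i i := by
        have h0 : 0 ∈ Finset.range n := by simpa using i.pos
        show (1 : NNReal) ≤ (Finset.range n).sup fun m => mPow A m i i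
        exact le_trans (le_of_eq (by simp)) (Finset.le_sup (f := fun m => mPow A m i i) h0)
  | succ N ih =>
    intro l i j hlen hj
    by_cases hnd : (i :: l).Nodup
    · have hcard : (i :: l).length ≤ n := by
        have := hnd.length_le_card
        simpa using this
      have hlt : l.length ∈ Finset.range n := by
        simp only [Finset.mem_range]
        simp only [List.length_cons] at hcard
        omega
      calc wW A (i :: l) ≤ mPow A l.length i j := wW_le_mPow A l i j hj
        _ ≤ klStar A i j := Finset.le_sup (f := fun m => mPow A m i j) hlt
    · obtain ⟨l1, v, l2, l3, heq⟩ := exists_dup_decomp (i :: l) hnd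
      -- the shortened walk
      have hw_orig : wW A (i :: l) =
          wW A (l1 ++ [v]) * (wW A (v :: (l2 ++ [v])) * wW A (v :: l3)) := by
        rw [heq, wW_split]
        congr 1
        have : (v :: (l2 ++ v :: l3)) = (v :: l2) ++ v :: l3 := by simp
        rw [this, wW_split]
        simp
      have hmid : wW A (v :: (l2 ++ [v])) ≤ 1 := by
        rw [← cycleWeight_eq_wW]
        exact hcyc (v :: l2) (by simp)
      have hw_new : wW A (l1 ++ v :: l3) = wW A (l1 ++ [v]) * wW A (v :: l3) := wW_split ..
      have hle : wW A (i :: l) ≤ wW A (l1 ++ v :: l3) := by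
        rw [hw_orig, hw_new]
        calc wW A (l1 ++ [v]) * (wW A (v :: (l2 ++ [v])) * wW A (v :: l3))
            ≤ wW A (l1 ++ [v]) * (1 * wW A (v :: l3)) := by
              exact mul_le_mul_right (mul_le_mul_left hmid _) _
          _ = wW A (l1 ++ [v]) * wW A (v :: l3) := by rw [one_mul]
      -- identify head of new walk
      have hlast_orig : ((l1 ++ (v :: l2)) ++ (v :: l3)).getLast? = some j := by
        rw [show (l1 ++ (v :: l2)) ++ (v :: l3) = l1 ++ v :: (l2 ++ v :: l3) by simp, ← heq]
        exact hj
      have hlast : (l1 ++ v :: l3).getLast? = some j := by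
        rw [List.getLast?_append_cons] at hlast_orig ⊢
        exact hlast_orig
      cases l1 with
      | nil =>
        simp only [List.nil_append] at heq hlast
        have hiv : i = v := by injection heq
        subst hiv
        have hlen3 : l3.length ≤ N := by
          have : l.length = l2.length + 1 + l3.length := by
            have := congrArg List.length heq
            simp at this
            omega
          omega
        calc wW A (i :: l) ≤ wW A (i :: l3) := by simpa using hle
          _ ≤ klStar A i j := ih l3 i j hlen3 hlast
      | cons a l1' =>
        have hia : i = a := by injection heq
        subst hia
        have htail : l = l1' ++ v :: (l2 ++ v :: l3) := by injection heq
        have hlen' : (l1' ++ v :: l3).length ≤ N := by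
          have := congrArg List.length htail
          simp at this
          simp
          omega
        calc wW A (i :: l) ≤ wW A (i :: (l1' ++ v :: l3)) := by simpa using hle
          _ ≤ klStar A i j := ih (l1' ++ v :: l3) i j hlen' (by simpa using hlast)

omit hcyc

lemma mPow_attained : ∀ (m : ℕ) (i j : Fin n), mPow A m i j = 0 ∨
    ∃ l : List (Fin n), l.length = m ∧ (i :: l).getLast? = some j ∧
      wW A (i :: l) = mPow A m i j := by
  intro m
  induction m with
  | zero =>
    intro i j
    by_cases h : i = j
    · subst h
      exact Or.inr ⟨[], rfl, by simp, by simp⟩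
    · exact Or.inl (by simp [h])
  | succ m ih =>
    intro i j
    obtain ⟨t, _, hts⟩ := Finset.exists_mem_eq_sup univ ⟨i, Finset.mem_univ i⟩
      (fun t => mPow A m i t * A t j)
    have hform : mPow A (m+1) i j = mPow A m i t * A t j := hts
    rcases ih i t with h0 | ⟨l, hl, hlast, hww⟩
    · exact Or.inl (by rw [hform, h0, zero_mul])
    · refine Or.inr ⟨l ++ [j], by simp [hl], ?_, ?_⟩
      · rw [show i :: (l ++ [j]) = (i :: l) ++ j :: [] by simp, List.getLast?_append_cons]
        rfl
      -- decompose i :: l = l0 ++ [t]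
      have hne : (i :: l) ≠ [] := by simp
      have hgl : (i :: l).getLast hne = t := by
        rwa [List.getLast?_eq_some_getLast hne, Option.some.injEq] at hlast
      have hdecomp : i :: l = (i :: l).dropLast ++ [t] := by
        conv_lhs => rw [← List.dropLast_append_getLast hne]
        rw [hgl]
      have : wW A (i :: (l ++ [j])) = wW A (i :: l) * A t j := by
        have h1 : i :: (l ++ [j]) = (i :: l).dropLast ++ t :: [j] := by
          rw [show i :: (l ++ [j]) = (i :: l) ++ [j] by simp, hdecomp]
          simp
        rw [h1, wW_split, ← hdecomp]
        simp [wW]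
      rw [this, hww, hform]

include hcyc

lemma mPow_le_klStar (m : ℕ) (i j : Fin n) : mPow A m i j ≤ klStar A i j := by
  rcases mPow_attained A m i j with h0 | ⟨l, hl, hlast, hww⟩
  · rw [h0]; exact zero_le
  · rw [← hww]
    exact wW_le_klStar A hcyc l.length l i j le_rfl hlast

lemma mPow_diag_le_one (m : ℕ) (p : Fin n) : mPow A m p p ≤ 1 := by
  rcases mPow_attained A m p p with h0 | ⟨l, hl, hlast, hww⟩
  · rw [h0]; exact zero_le
  · rw [← hww]
    cases l with
    | nil => simp
    | cons a l' =>
      have hne : (a :: l') ≠ [] := by simp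
      have hlast' : (a :: l').getLast? = some p := by
        rwa [List.getLast?_cons_cons] at hlast
      have hgl : (a :: l').getLast hne = p := by
        rwa [List.getLast?_eq_some_getLast hne, Option.some.injEq] at hlast'
      have hdecomp : a :: l' = (a :: l').dropLast ++ [p] := by
        conv_lhs => rw [← List.dropLast_append_getLast hne]
        rw [hgl]
      rw [show p :: a :: l' = p :: ((a :: l').dropLast ++ [p]) by rw [← hdecomp],
        ← cycleWeight_eq_wW]
      exact hcyc _ (by simp)

lemma klStar_diag (p : Fin n) : klStar A p p = 1 := by
  apply le_antisymm
  · exact Finset.sup_le fun m _ => mPow_diag_le_one A hcyc m p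
  · have h0 : 0 ∈ Finset.range n := by simpa using p.pos
    show (1 : NNReal) ≤ (Finset.range n).sup fun m => mPow A m p p
    exact le_trans (le_of_eq (by simp)) (Finset.le_sup (f := fun m => mPow A m p p) h0)

lemma klStar_mul_le (i p j : Fin n) : klStar A i p * klStar A p j ≤ klStar A i j := by
  apply finsetSup_mul_le
  intro a _
  apply mul_finsetSup_le
  intro b _
  calc mPow A a i p * mPow A b p j ≤ mPow A (a + b) i j := mPow_mul_le A a b i p j
    _ ≤ klStar A i j := mPow_le_klStar A hcyc (a+b) i j

end Stmt13Aux

/-- each column of `A*` is a max extremal of the max-algebraic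
span of the columns of `A*`. -/
theorem stmt_13 {n : ℕ} (A : Matrix (Fin n) (Fin n) NNReal)
    (hdef : maxCycleMean A = 1) (k : Fin n) (u w : Fin n → NNReal)
    (hu : ∃ c : Fin n → NNReal, ∀ i, u i = univ.sup fun t => c t * klStar A i t)
    (hw : ∃ c : Fin n → NNReal, ∀ i, w i = univ.sup fun t => c t * klStar A i t)
    (h : ∀ i, klStar A i k = max (u i) (w i)) :
    (∀ i, klStar A i k = u i) ∨ (∀ i, klStar A i k = w i) := by
  classical
  have hn0 : 0 < n := k.pos
  -- every "cycle" (closed walk) has weight at most one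
  have hcyc : ∀ c : List (Fin n), c ≠ [] → cycleWeight A c ≤ 1 := by
    intro c hc
    have hbdd : BddAbove {x | ∃ l : List (Fin n), l ≠ [] ∧ x = cycleMean A l} := by
      by_contra hb
      have h0 := csSup_of_not_bddAbove hb
      rw [show sSup (∅ : Set NNReal) = 0 by simp] at h0
      rw [maxCycleMean] at hdef
      rw [h0] at hdef
      exact zero_ne_one hdef
    have hmean : cycleMean A c ≤ 1 := by
      have := le_csSup hbdd ⟨c, hc, rfl⟩
      rwa [← maxCycleMean, hdef] at this
    have hlen : (c.length : ℝ) ≠ 0 := by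
      simp [List.length_eq_zero_iff, hc]
    have hw : cycleWeight A c = (cycleMean A c) ^ (c.length : ℝ) := by
      rw [cycleMean, ← NNReal.rpow_mul, inv_mul_cancel₀ hlen, NNReal.rpow_one]
    rw [hw]
    exact NNReal.rpow_le_one hmean (by positivity)
  have hdiag : klStar A k k = 1 := Stmt13Aux.klStar_diag A hcyc k
  -- key extremality step
  have key : ∀ v : Fin n → NNReal,
      (∃ c : Fin n → NNReal, ∀ i, v i = univ.sup fun t => c t * klStar A i t) →
      v k = 1 → (∀ i, v i ≤ klStar A i k) → ∀ i, klStar A i k = v i := by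
    intro v ⟨c, hc⟩ hvk hvle i
    obtain ⟨t0, _, hts⟩ := Finset.exists_mem_eq_sup univ ⟨k, Finset.mem_univ k⟩
      (fun t => c t * klStar A k t)
    have ht0 : c t0 * klStar A k t0 = 1 := by
      rw [← hts, ← hc k, hvk]
    refine le_antisymm ?_ (hvle i)
    calc klStar A i k = klStar A i k * (c t0 * klStar A k t0) := by rw [ht0, mul_one]
      _ = c t0 * (klStar A i k * klStar A k t0) := by ring
      _ ≤ c t0 * klStar A i t0 :=
          mul_le_mul_right (Stmt13Aux.klStar_mul_le A hcyc i k t0) _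
      _ ≤ univ.sup (fun t => c t * klStar A i t) :=
          Finset.le_sup (f := fun t => c t * klStar A i t) (Finset.mem_univ t0)
      _ = v i := (hc i).symm
  have hk := h k
  rw [hdiag] at hk
  rcases max_choice (u k) (w k) with h1 | h1
  · left
    exact key u hu (by rw [← h1, ← hk]) (fun i => by rw [h i]; exact le_max_left _ _)
  · right
    exact key w hw (by rw [← h1, ← hk]) (fun i => by rw [h i]; exact le_max_right _ _)
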